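/- Let m ≥ 3 be an integer, ℓ a prime number dividing m, and f := ℓ·m. Let ζ be a primitive f-th root of unity in a field of characteristic zero, and set ζ_m := ζ^ℓ, a primitive m-th root of unity. Then N_{ℚ(ζ)/ℚ(ζ_m)}(1 − ζ) = 1 − ζ_m, where N_{ℚ(ζ)/ℚ(ζ_m)} denotes the field norm from the f-th cyclotomic field ℚ(ζ) to its subfield ℚ(ζ_m). -/

import Mathlib

set_option maxHeartbeats 1000000

open IntermediateField
open Polynomial

theorem statement4 {K : Type*} [Field K] [CharZero K] (m ℓ : ℕ) (hm : 3 ≤ m)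
    (hℓ : ℓ.Prime) (hdvd : ℓ ∣ m) (ζ : K) (hζ : IsPrimitiveRoot ζ (ℓ * m)) :
    Algebra.norm ℚ⟮ζ ^ ℓ⟯
        (1 - IntermediateField.AdjoinSimple.gen ℚ⟮ζ ^ ℓ⟯ ζ)
      = 1 - IntermediateField.AdjoinSimple.gen ℚ (ζ ^ ℓ) := by
  have hl2 := hℓ.two_le
  have hm0 : 0 < m := by omega
  have hn0 : 0 < ℓ * m := by positivity
  have hζm : IsPrimitiveRoot (ζ ^ ℓ) m := hζ.pow hn0 rfl
  have hintζ : IsIntegral ℚ ζ := (hζ.isIntegral hn0).tower_top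
  have hintζm : IsIntegral ℚ (ζ ^ ℓ) := (hζm.isIntegral hm0).tower_top
  have hintζF : IsIntegral ℚ⟮ζ ^ ℓ⟯ ζ := hintζ.tower_top
  have hdeg1 : Module.finrank ℚ ℚ⟮ζ⟯ = (ℓ * m).totient := by
    rw [IntermediateField.adjoin.finrank hintζ, ← Polynomial.cyclotomic_eq_minpoly_rat hζ hn0,
      Polynomial.natDegree_cyclotomic]
  have hdeg2 : Module.finrank ℚ ℚ⟮ζ ^ ℓ⟯ = m.totient := by
    rw [IntermediateField.adjoin.finrank hintζm, ← Polynomial.cyclotomic_eq_minpoly_rat hζm hm0,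
      Polynomial.natDegree_cyclotomic]
  have hres : (ℚ⟮ζ ^ ℓ⟯⟮ζ⟯).restrictScalars ℚ = ℚ⟮ζ⟯ := by
    erw [IntermediateField.adjoin_simple_adjoin_simple]
    apply le_antisymm
    · rw [IntermediateField.adjoin_le_iff, Set.insert_subset_iff, Set.singleton_subset_iff]
      exact ⟨pow_mem (IntermediateField.mem_adjoin_simple_self ℚ ζ) ℓ,
        IntermediateField.mem_adjoin_simple_self ℚ ζ⟩
    · apply IntermediateField.adjoin.mono
      simp
  have hdegF : Module.finrank ℚ⟮ζ ^ ℓ⟯ ℚ⟮ζ ^ ℓ⟯⟮ζ⟯ = ℓ := by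
    have ht := Module.finrank_mul_finrank ℚ ℚ⟮ζ ^ ℓ⟯ ℚ⟮ζ ^ ℓ⟯⟮ζ⟯
    have h3 : Module.finrank ℚ ((ℚ⟮ζ ^ ℓ⟯⟮ζ⟯).restrictScalars ℚ) = (ℓ * m).totient := by
      rw [hres, hdeg1]
    have h4 : Module.finrank ℚ ((ℚ⟮ζ ^ ℓ⟯⟮ζ⟯).restrictScalars ℚ)
        = Module.finrank ℚ ℚ⟮ζ ^ ℓ⟯⟮ζ⟯ := rfl
    rw [hdeg2] at ht
    have htot : (ℓ * m).totient = ℓ * m.totient := Nat.totient_mul_of_prime_of_dvd hℓ hdvd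
    have hmt : 0 < m.totient := Nat.totient_pos.2 hm0
    have : m.totient * Module.finrank ℚ⟮ζ ^ ℓ⟯ ℚ⟮ζ ^ ℓ⟯⟮ζ⟯ = m.totient * ℓ := by
      rw [ht, ← h4, h3, htot]; ring
    exact Nat.eq_of_mul_eq_mul_left hmt this
  -- the minimal polynomial of `1 - ζ` over `ℚ⟮ζ ^ ℓ⟯`
  set g : ℚ⟮ζ ^ ℓ⟯ := IntermediateField.AdjoinSimple.gen ℚ (ζ ^ ℓ) with hg
  set q : Polynomial ℚ⟮ζ ^ ℓ⟯ := (X - C 1) ^ ℓ - C ((-1) ^ ℓ * g) with hq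
  have hqmonic : q.Monic := by
    apply Polynomial.Monic.sub_of_left ((monic_X_sub_C (1 : ℚ⟮ζ ^ ℓ⟯)).pow ℓ)
    calc degree (C ((-1) ^ ℓ * g)) ≤ 0 := degree_C_le
    _ < ℓ := by exact_mod_cast Nat.cast_pos.mpr (by omega)
    _ = degree ((X - C (1 : ℚ⟮ζ ^ ℓ⟯)) ^ ℓ) := by
        rw [degree_pow, degree_X_sub_C]; simp
  have hqdeg : q.natDegree = ℓ := by
    rw [hq]
    rw [Polynomial.natDegree_sub_eq_left_of_natDegree_lt]
    · rw [natDegree_pow, natDegree_X_sub_C, mul_one]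
    · rw [natDegree_pow, natDegree_X_sub_C, mul_one, natDegree_C]
      omega
  have halg : algebraMap ℚ⟮ζ ^ ℓ⟯ K g = ζ ^ ℓ := IntermediateField.AdjoinSimple.algebraMap_gen ℚ (ζ ^ ℓ)
  have hroot : Polynomial.aeval (1 - ζ) q = 0 := by
    rw [hq]
    simp only [map_sub, map_pow, map_mul, aeval_X, aeval_C, map_one, map_neg, halg]
    ring
  have hadj : ℚ⟮ζ ^ ℓ⟯⟮(1 : K) - ζ⟯ = ℚ⟮ζ ^ ℓ⟯⟮ζ⟯ := by
    apply le_antisymm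
    · rw [IntermediateField.adjoin_le_iff, Set.singleton_subset_iff]
      exact sub_mem (one_mem _) (IntermediateField.mem_adjoin_simple_self _ ζ)
    · rw [IntermediateField.adjoin_le_iff, Set.singleton_subset_iff]
      have h2 : (1 : K) - (1 - ζ) ∈ ℚ⟮ζ ^ ℓ⟯⟮(1 : K) - ζ⟯ :=
        sub_mem (one_mem _) (IntermediateField.mem_adjoin_simple_self _ _)
      simpa using h2
  have hint1ζ : IsIntegral ℚ⟮ζ ^ ℓ⟯ ((1 : K) - ζ) := (isIntegral_one).sub hintζF
  have hmindeg : (minpoly ℚ⟮ζ ^ ℓ⟯ ((1 : K) - ζ)).natDegree = ℓ := by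
    rw [← IntermediateField.adjoin.finrank hint1ζ, hadj, hdegF]
  have hminq : minpoly ℚ⟮ζ ^ ℓ⟯ ((1 : K) - ζ) = q := by
    symm
    apply minpoly.unique _ _ hqmonic hroot
    intro p hpmonic hproot
    have h1 : degree q = (ℓ : ℕ) := by
      rw [degree_eq_natDegree hqmonic.ne_zero, hqdeg]
    have h2 : degree (minpoly ℚ⟮ζ ^ ℓ⟯ ((1 : K) - ζ)) = (ℓ : ℕ) := by
      rw [degree_eq_natDegree (minpoly.ne_zero hint1ζ), hmindeg]
    rw [h1, ← h2]
    exact minpoly.min _ _ hpmonic hproot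
  -- now the norm computation
  have hFDL : FiniteDimensional ℚ⟮ζ ^ ℓ⟯ ℚ⟮ζ ^ ℓ⟯⟮ζ⟯ :=
    IntermediateField.adjoin.finiteDimensional hintζF
  set x : ℚ⟮ζ ^ ℓ⟯⟮ζ⟯ := 1 - IntermediateField.AdjoinSimple.gen ℚ⟮ζ ^ ℓ⟯ ζ with hx
  have hmapx : algebraMap ℚ⟮ζ ^ ℓ⟯⟮ζ⟯ K x = 1 - ζ := by
    rw [hx, map_sub, map_one, IntermediateField.AdjoinSimple.algebraMap_gen]
  have hxint : IsIntegral ℚ⟮ζ ^ ℓ⟯ x := IsIntegral.of_finite _ _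
  have hminx : minpoly ℚ⟮ζ ^ ℓ⟯ x = q := by
    rw [← hminq, ← hmapx,
      minpoly.algebraMap_eq (algebraMap ℚ⟮ζ ^ ℓ⟯⟮ζ⟯ K).injective]
  have hmem : (IntermediateField.adjoin.powerBasis hintζF).gen ∈
      Algebra.adjoin ℚ⟮ζ ^ ℓ⟯ ({x} : Set ℚ⟮ζ ^ ℓ⟯⟮ζ⟯) := by
    rw [IntermediateField.adjoin.powerBasis_gen]
    have : IntermediateField.AdjoinSimple.gen ℚ⟮ζ ^ ℓ⟯ ζ = 1 - x := by rw [hx]; ring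
    rw [this]
    exact sub_mem (one_mem _) (Algebra.self_mem_adjoin_singleton _ _)
  have htop : Algebra.adjoin ℚ⟮ζ ^ ℓ⟯ ({x} : Set ℚ⟮ζ ^ ℓ⟯⟮ζ⟯) = ⊤ := by
    rw [eq_top_iff, ← (IntermediateField.adjoin.powerBasis hintζF).adjoin_gen_eq_top,
      Algebra.adjoin_le_iff, Set.singleton_subset_iff]
    exact hmem
  set pb2 := PowerBasis.ofAdjoinEqTop hxint htop with hpb2
  have hnorm := Algebra.PowerBasis.norm_gen_eq_coeff_zero_minpoly pb2
  rw [PowerBasis.ofAdjoinEqTop_gen] at hnorm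
  have hdim : pb2.dim = ℓ := by
    rw [hpb2, PowerBasis.ofAdjoinEqTop_dim, hminx, hqdeg]
  rw [hdim, hminx] at hnorm
  have hcoeff : q.coeff 0 = (-1) ^ ℓ * (1 - g) := by
    rw [hq]
    rw [coeff_sub, coeff_C]
    have : ((X - C (1 : ℚ⟮ζ ^ ℓ⟯)) ^ ℓ).coeff 0 = (-1) ^ ℓ := by
      rw [coeff_zero_eq_eval_zero]
      simp
    rw [this]
    simp
    ring
  rw [hnorm, hcoeff, ← mul_assoc, ← mul_pow]
  simp
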